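/- Stability of tropical curves under coefficient perturbation: let ε > 0, B ⊆ ℤ², and f(x,y) = min_{(i,j)∈B}(ix+jy+a_{ij}), g(x,y) = min_{(i,j)∈B}(ix+jy+a_{ij}+δ_{ij}) be tropical series on an open set Ω° with |δ_{ij}| < ε for all (i,j). Then the corner locus C(f) is contained in the 2ε-neighborhood of the corner locus C(g), i.e. every point of C(f) lies within distance 2ε of C(g). -/

import Mathlib

open scoped RealInnerProductSpace

noncomputable section TropicalAux

/-- The plane. -/
local notation "E2" => EuclideanSpace ℝ (Fin 2)

/-- Embedding of an integer vector into the Euclidean plane. -/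
def vec2 (d : ℤ × ℤ) : EuclideanSpace ℝ (Fin 2) :=
  (WithLp.equiv 2 (Fin 2 → ℝ)).symm ![(d.1 : ℝ), (d.2 : ℝ)]

lemma inner_vec2 (d : ℤ × ℤ) (x : EuclideanSpace ℝ (Fin 2)) :
    ⟪vec2 d, x⟫ = (d.1 : ℝ) * x 0 + (d.2 : ℝ) * x 1 := by
  simp [vec2, PiLp.inner_apply, Fin.sum_univ_two, RCLike.inner_apply]
  ring

lemma norm_vec2_sq (d : ℤ × ℤ) : ‖vec2 d‖ ^ 2 = ((d.1 : ℝ)) ^ 2 + ((d.2 : ℝ)) ^ 2 := by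
  rw [← real_inner_self_eq_norm_sq]
  rw [inner_vec2]
  simp [vec2]
  ring

lemma vec2_sub (d e : ℤ × ℤ) : vec2 (d - e) = vec2 d - vec2 e := by
  ext i
  fin_cases i <;>
    simp [vec2, PiLp.sub_apply]

lemma one_le_norm_vec2 {d : ℤ × ℤ} (hd : d ≠ 0) : 1 ≤ ‖vec2 d‖ := by
  have h1 : (1 : ℤ) ≤ d.1 ^ 2 + d.2 ^ 2 := by
    have : d.1 ≠ 0 ∨ d.2 ≠ 0 := by
      by_contra hc
      push_neg at hc
      exact hd (Prod.ext hc.1 hc.2)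
    rcases this with h | h
    · nlinarith [sq_nonneg d.2, Int.one_le_abs h, sq_abs d.1, sq_nonneg (|d.1| - 1)]
    · nlinarith [sq_nonneg d.1, Int.one_le_abs h, sq_abs d.2, sq_nonneg (|d.2| - 1)]
  have h2 : (1 : ℝ) ≤ ‖vec2 d‖ ^ 2 := by
    rw [norm_vec2_sq]
    exact_mod_cast h1
  nlinarith [norm_nonneg (vec2 d)]

lemma vec2_injective : Function.Injective vec2 := by
  intro d e h
  by_contra hne
  have h0 : vec2 (d - e) = 0 := by rw [vec2_sub, h, sub_self]
  have := one_le_norm_vec2 (sub_ne_zero.2 hne)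
  rw [h0, norm_zero] at this
  linarith

/-- If `h` is bounded above near `w` by an affine function with equality at `w`
and is differentiable there, the derivative is pinned. -/
lemma fderiv_pin {h : EuclideanSpace ℝ (Fin 2) → ℝ} {v : EuclideanSpace ℝ (Fin 2)} {c : ℝ}
    {w : EuclideanSpace ℝ (Fin 2)} {s : Set (EuclideanSpace ℝ (Fin 2))}
    (hs : s ∈ nhds w) (hle : ∀ x ∈ s, h x ≤ ⟪v, x⟫ + c) (heq : h w = ⟪v, w⟫ + c)
    (hd : DifferentiableAt ℝ h w) : fderiv ℝ h w = innerSL ℝ v := by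
  have hA : DifferentiableAt ℝ (fun x : EuclideanSpace ℝ (Fin 2) => ⟪v, x⟫ + c) w :=
    ((innerSL ℝ v).differentiableAt).add_const c
  have hmin : IsLocalMin (fun x => (⟪v, x⟫ + c) - h x) w := by
    filter_upwards [hs] with x hx
    have h1 := hle x hx
    linarith [heq]
  have h1 : fderiv ℝ (fun x => (⟪v, x⟫ + c) - h x) w = 0 := hmin.fderiv_eq_zero
  have h2 : fderiv ℝ (fun x => (⟪v, x⟫ + c) - h x) w = innerSL ℝ v - fderiv ℝ h w := by
    rw [fderiv_fun_sub hA hd, fderiv_add_const]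
    congr 1
    exact (innerSL ℝ v).fderiv
  rw [h1] at h2
  have := sub_eq_zero.1 h2.symm
  exact this.symm

end TropicalAux

set_option maxHeartbeats 2000000 in
theorem stmt_14 (U : Set (EuclideanSpace ℝ (Fin 2))) (hU : IsOpen U)
    (ε : ℝ) (hε : 0 < ε) (B : Set (ℤ × ℤ)) (a δ : ℤ × ℤ → ℝ)
    (hδ : ∀ ij ∈ B, |δ ij| < ε)
    (f g : EuclideanSpace ℝ (Fin 2) → ℝ)
    (hf : ∀ z ∈ U, IsLeast
      {v : ℝ | ∃ ij ∈ B, v = (ij.1 : ℝ) * z 0 + (ij.2 : ℝ) * z 1 + a ij} (f z))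
    (hg : ∀ z ∈ U, IsLeast
      {v : ℝ | ∃ ij ∈ B, v = (ij.1 : ℝ) * z 0 + (ij.2 : ℝ) * z 1 + a ij + δ ij} (g z)) :
    ∀ z ∈ U, ¬ DifferentiableAt ℝ f z → Metric.closedBall z (2 * ε) ⊆ U →
      ∃ w, ¬ DifferentiableAt ℝ g w ∧ dist z w ≤ 2 * ε := by
  intro z hz hnd hball
  by_contra hcon
  push_neg at hcon
  have hdiff : ∀ w ∈ Metric.closedBall z (2 * ε), DifferentiableAt ℝ g w := by
    intro w hw
    by_contra hnd'
    have h1 := hcon w hnd'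
    rw [Metric.mem_closedBall, dist_comm] at hw
    linarith
  -- inner-product reformulation of the hypotheses
  have key : ∀ (m : ℤ × ℤ) (x : EuclideanSpace ℝ (Fin 2)),
      (m.1 : ℝ) * x 0 + (m.2 : ℝ) * x 1 = ⟪vec2 m, x⟫ := fun m x => (inner_vec2 m x).symm
  have hf' : ∀ x ∈ U, (∃ m ∈ B, f x = ⟪vec2 m, x⟫ + a m) ∧
      ∀ m ∈ B, f x ≤ ⟪vec2 m, x⟫ + a m := by
    intro x hx
    obtain ⟨⟨m, hm, hv⟩, hlb⟩ := hf x hx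
    exact ⟨⟨m, hm, by rw [← key]; exact hv⟩,
      fun m' hm' => hlb ⟨m', hm', by rw [key]⟩⟩
  have hg' : ∀ x ∈ U, (∃ m ∈ B, g x = ⟪vec2 m, x⟫ + (a m + δ m)) ∧
      ∀ m ∈ B, g x ≤ ⟪vec2 m, x⟫ + (a m + δ m) := by
    intro x hx
    obtain ⟨⟨m, hm, hv⟩, hlb⟩ := hg x hx
    exact ⟨⟨m, hm, by rw [← key]; rw [hv]; ring⟩,
      fun m' hm' => by
        have := hlb ⟨m', hm', rfl⟩
        rw [key] at this
        linarith⟩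
  -- f and g are uniformly ε-close on U
  have hfg : ∀ x ∈ U, |f x - g x| < ε := by
    intro x hx
    obtain ⟨⟨m, hm, hfx⟩, hflb⟩ := hf' x hx
    obtain ⟨⟨m', hm', hgx⟩, hglb⟩ := hg' x hx
    have h1 : g x ≤ ⟪vec2 m, x⟫ + (a m + δ m) := hglb m hm
    have h2 : f x ≤ ⟪vec2 m', x⟫ + a m' := hflb m' hm'
    have d1 := hδ m hm
    have d2 := hδ m' hm'
    rw [abs_lt] at d1 d2 ⊢
    constructor <;> [linarith; linarith]
  -- touching monomials for g:  P m w  means the affine function of slope m through (w, g w)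
  -- dominates g on all of U.
  set P : (ℤ × ℤ) → EuclideanSpace ℝ (Fin 2) → Prop :=
    fun d w => ∀ x ∈ U, g x ≤ g w + ⟪vec2 d, x - w⟫ with hP
  have touchP : ∀ w ∈ U, ∃ m ∈ B, P m w := by
    intro w hw
    obtain ⟨⟨m, hm, heqw⟩, -⟩ := hg' w hw
    refine ⟨m, hm, fun x hx => ?_⟩
    have h1 : g x ≤ ⟪vec2 m, x⟫ + (a m + δ m) := (hg' x hx).2 m hm
    rw [inner_sub_right]
    linarith
  have hzU : z ∈ U := hz
  have hzK : z ∈ Metric.closedBall z (2 * ε) := Metric.mem_closedBall_self (by positivity)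
  -- fix a touching monomial at z
  obtain ⟨mz, hmzB, hPz⟩ := touchP z hzU
  -- upper bound for g on the ball
  set M : ℝ := g z + ‖vec2 mz‖ * (2 * ε) with hM
  have hub : ∀ x ∈ Metric.closedBall z (2 * ε), g x ≤ M := by
    intro x hx
    have h1 := hPz x (hball hx)
    have h2 : ⟪vec2 mz, x - z⟫ ≤ ‖vec2 mz‖ * ‖x - z‖ := real_inner_le_norm _ _
    have h3 : ‖x - z‖ ≤ 2 * ε := by
      rw [← dist_eq_norm]
      exact hx
    nlinarith [norm_nonneg (vec2 mz)]
  -- lower bound for g on the ball, via continuity and compactness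
  have hgc : ContinuousOn g (Metric.closedBall z (2 * ε)) :=
    fun w hw => (hdiff w hw).continuousAt.continuousWithinAt
  obtain ⟨w0, hw0K, hw0min⟩ :=
    (isCompact_closedBall z (2 * ε)).exists_isMinOn ⟨z, hzK⟩ hgc
  have hlb : ∀ x ∈ Metric.closedBall z (2 * ε), g w0 ≤ g x := fun x hx =>
    isMinOn_iff.1 hw0min x hx
  have hMw0 : g w0 ≤ M := le_trans (hlb z hzK)
    (by rw [hM]; nlinarith [norm_nonneg (vec2 mz)])
  -- pinning the derivative
  have pin : ∀ w ∈ Metric.closedBall z (2 * ε), ∀ d, P d w →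
      fderiv ℝ g w = innerSL ℝ (vec2 d) := by
    intro w hw d hPd
    refine fderiv_pin (v := vec2 d) (c := g w - ⟪vec2 d, w⟫) (s := U)
      (hU.mem_nhds (hball hw)) ?_ (by ring) (hdiff w hw)
    intro x hx
    have := hPd x hx
    rw [inner_sub_right] at this
    linarith
  have uniq : ∀ w ∈ Metric.closedBall z (2 * ε), ∀ d d', P d w → P d' w → d = d' := by
    intro w hw d d' h1 h2
    have e1 := pin w hw d h1
    have e2 := pin w hw d' h2
    rw [e1] at e2
    apply vec2_injective
    have h3 : ∀ x, ⟪vec2 d, x⟫ = ⟪vec2 d', x⟫ := fun x => by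
      have := congrArg (fun L : EuclideanSpace ℝ (Fin 2) →L[ℝ] ℝ => L x) e2
      simpa using this
    have h4 : ⟪vec2 d - vec2 d', vec2 d - vec2 d'⟫ = 0 := by
      rw [inner_sub_left, h3 (vec2 d - vec2 d')]
      ring
    exact sub_eq_zero.1 (inner_self_eq_zero.1 h4)
  -- g is affine on every closed ball of radius ρ < 2ε
  have haffρ : ∀ ρ : ℝ, 0 ≤ ρ → ρ < 2 * ε →
      ∀ x ∈ Metric.closedBall z ρ, g x = g z + ⟪vec2 mz, x - z⟫ := by
    intro ρ hρ0 hρ2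
    have hsub : Metric.closedBall z ρ ⊆ Metric.closedBall z (2 * ε) :=
      Metric.closedBall_subset_closedBall (by linarith)
    set s : ℝ := 2 * ε - ρ with hs
    have hspos : 0 < s := by rw [hs]; linarith
    set R : ℝ := (M - g w0) / s with hR
    have hR0 : 0 ≤ R := by
      rw [hR]
      apply div_nonneg _ hspos.le
      linarith
    -- gradients of touching monomials on the ρ-ball are bounded
    have gradbound : ∀ w ∈ Metric.closedBall z ρ, ∀ m, P m w → ‖vec2 m‖ ≤ R := by
      intro w hw m hPm
      by_cases hm0 : vec2 m = 0
      · rw [hm0, norm_zero]; exact hR0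
      · have hnm : 0 < ‖vec2 m‖ := norm_pos_iff.2 hm0
        set y : EuclideanSpace ℝ (Fin 2) := w - (s / ‖vec2 m‖) • vec2 m with hydef
        have hyw : dist y w = s := by
          rw [dist_eq_norm, hydef]
          have h : w - (s / ‖vec2 m‖) • vec2 m - w = -((s / ‖vec2 m‖) • vec2 m) := by abel
          rw [h, norm_neg, norm_smul, Real.norm_eq_abs, abs_of_pos (by positivity)]
          field_simp
        have hyK : y ∈ Metric.closedBall z (2 * ε) := by
          rw [Metric.mem_closedBall]
          calc dist y z ≤ dist y w + dist w z := dist_triangle _ _ _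
            _ ≤ 2 * ε := by
                rw [hyw, hs]
                have := Metric.mem_closedBall.1 hw
                linarith
        have h1 := hPm y (hball hyK)
        have h2 : ⟪vec2 m, y - w⟫ = -(s * ‖vec2 m‖) := by
          rw [hydef]
          have h : w - (s / ‖vec2 m‖) • vec2 m - w = -((s / ‖vec2 m‖) • vec2 m) := by abel
          rw [h, inner_neg_right, real_inner_smul_right, real_inner_self_eq_norm_sq]
          field_simp
        have h3 := hlb y hyK
        have h4 : g w ≤ M := hub w (hsub hw)
        rw [hR, le_div_iff₀ hspos]
        nlinarith
    -- the finite set of possible gradients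
    set N : ℤ := ⌈R⌉ with hN
    set D : Finset (ℤ × ℤ) := Finset.Icc (-N, -N) (N, N) with hD
    have memD : ∀ m : ℤ × ℤ, ‖vec2 m‖ ≤ R → m ∈ D := by
      intro m hm
      have hsq := norm_vec2_sq m
      have h1 : |(m.1 : ℝ)| ≤ ‖vec2 m‖ := by
        rw [abs_le]
        constructor <;> nlinarith [norm_nonneg (vec2 m), sq_nonneg ((m.2 : ℝ))]
      have h2 : |(m.2 : ℝ)| ≤ ‖vec2 m‖ := by
        rw [abs_le]
        constructor <;> nlinarith [norm_nonneg (vec2 m), sq_nonneg ((m.1 : ℝ))]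
      have hRN : R ≤ (N : ℝ) := Int.le_ceil R
      have hm1 : |(m.1 : ℝ)| ≤ (N : ℝ) := by linarith
      have hm2 : |(m.2 : ℝ)| ≤ (N : ℝ) := by linarith
      rw [← Int.cast_abs, Int.cast_le] at hm1 hm2
      obtain ⟨hm1a, hm1b⟩ := abs_le.1 hm1
      obtain ⟨hm2a, hm2b⟩ := abs_le.1 hm2
      rw [hD, Finset.mem_Icc]
      exact ⟨⟨hm1a, hm2a⟩, ⟨hm1b, hm2b⟩⟩
    -- the classes
    set S : (ℤ × ℤ) → Set (EuclideanSpace ℝ (Fin 2)) :=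
      fun d => {w | w ∈ Metric.closedBall z ρ ∧ P d w} with hS
    have Sclosed : ∀ d, IsClosed (S d) := by
      intro d
      apply IsSeqClosed.isClosed
      intro wseq w hmem hlim
      have hwK : w ∈ Metric.closedBall z ρ :=
        Metric.isClosed_closedBall.mem_of_tendsto hlim
          (Filter.Eventually.of_forall fun n => (hmem n).1)
      refine ⟨hwK, fun x hx => ?_⟩
      obtain ⟨mw, hmwB, hPmw⟩ := touchP w (hball (hsub hwK))
      have hbound : ∀ n, g x ≤ g w + ⟪vec2 mw, wseq n - w⟫ + ⟪vec2 d, x - wseq n⟫ := by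
        intro n
        have h1 := (hmem n).2 x hx
        have h2 := hPmw (wseq n) (hball (hsub (hmem n).1))
        linarith
      have hcont : Filter.Tendsto
          (fun n => g w + ⟪vec2 mw, wseq n - w⟫ + ⟪vec2 d, x - wseq n⟫)
          Filter.atTop (nhds (g w + ⟪vec2 mw, w - w⟫ + ⟪vec2 d, x - w⟫)) := by
        apply Filter.Tendsto.add
        apply Filter.Tendsto.add tendsto_const_nhds
        · exact ((continuous_const.inner (continuous_id.sub continuous_const)).tendsto w).comp hlim
        · exact ((continuous_const.inner (continuous_const.sub continuous_id)).tendsto w).comp hlim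
      have hfinal := ge_of_tendsto' hcont hbound
      rw [sub_self, inner_zero_right] at hfinal
      linarith
    have Scover : ∀ w ∈ Metric.closedBall z ρ, ∃ d ∈ D, w ∈ S d := by
      intro w hw
      obtain ⟨m, hmB, hPm⟩ := touchP w (hball (hsub hw))
      exact ⟨m, memD m (gradbound w hw m hPm), hw, hPm⟩
    have hzρ : z ∈ Metric.closedBall z ρ := Metric.mem_closedBall_self hρ0
    -- connectedness: the whole ρ-ball is in the class of mz
    have hKS : ∀ w ∈ Metric.closedBall z ρ, P mz w := by
      intro w hw
      by_contra hPw
      have hpc : IsPreconnected (Metric.closedBall z ρ) :=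
        (convex_closedBall z ρ).isPreconnected
      set uSet : Set (EuclideanSpace ℝ (Fin 2)) := (⋃ d ∈ D.erase mz, S d)ᶜ with hu
      set vSet : Set (EuclideanSpace ℝ (Fin 2)) := (S mz)ᶜ with hv
      have huo : IsOpen uSet := by
        rw [hu]
        exact (Set.Finite.isClosed_biUnion (D.erase mz).finite_toSet
          (fun d _ => Sclosed d)).isOpen_compl
      have hvo : IsOpen vSet := (Sclosed mz).isOpen_compl
      have hcov : Metric.closedBall z ρ ⊆ uSet ∪ vSet := by
        intro w' hw'
        obtain ⟨d, hdD, hwS⟩ := Scover w' hw'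
        by_cases hd : d = mz
        · left
          rw [hu, Set.mem_compl_iff]
          intro hmem
          obtain ⟨d', hd'⟩ := Set.mem_iUnion.1 hmem
          obtain ⟨hd'D, hwS'⟩ := Set.mem_iUnion.1 hd'
          have hdd : d' = d := uniq w' (hsub hw') d' d hwS'.2 hwS.2
          rw [hdd, hd] at hd'D
          exact (Finset.notMem_erase mz D) hd'D
        · right
          rw [hv, Set.mem_compl_iff]
          intro hmem
          exact hd (uniq w' (hsub hw') d mz hwS.2 hmem.2)
      have hneu : (Metric.closedBall z ρ ∩ uSet).Nonempty := by
        refine ⟨z, hzρ, ?_⟩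
        rw [hu, Set.mem_compl_iff]
        intro hmem
        obtain ⟨d', hd'⟩ := Set.mem_iUnion.1 hmem
        obtain ⟨hd'D, hwS'⟩ := Set.mem_iUnion.1 hd'
        have hdd : d' = mz := uniq z hzK d' mz hwS'.2 hPz
        exact (Finset.notMem_erase mz D) (hdd ▸ hd'D)
      have hnev : (Metric.closedBall z ρ ∩ vSet).Nonempty := by
        refine ⟨w, hw, ?_⟩
        rw [hv, Set.mem_compl_iff]
        intro hmem
        exact hPw hmem.2
      obtain ⟨w', hw'K, hw'u, hw'v⟩ := hpc uSet vSet huo hvo hcov hneu hnev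
      obtain ⟨d, hdD, hwS⟩ := Scover w' hw'K
      by_cases hd : d = mz
      · rw [hv, Set.mem_compl_iff] at hw'v
        exact hw'v (hd ▸ hwS)
      · rw [hu, Set.mem_compl_iff] at hw'u
        exact hw'u (Set.mem_biUnion (Finset.mem_erase.2 ⟨hd, hdD⟩) hwS)
    -- hence g is affine on the ρ-ball
    intro x hx
    have h1 := hPz x (hball (hsub hx))
    have h2 := hKS x hx z hzU
    have h3 : ⟪vec2 mz, z - x⟫ = -⟪vec2 mz, x - z⟫ := by
      rw [← inner_neg_right]
      congr 1
      abel
    rw [h3] at h2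
    linarith
  -- g is affine on the full closed 2ε-ball, by continuity
  have hgaff : ∀ x ∈ Metric.closedBall z (2 * ε), g x = g z + ⟪vec2 mz, x - z⟫ := by
    intro x hx
    by_cases hxlt : dist x z < 2 * ε
    · exact haffρ (dist x z) dist_nonneg hxlt x (Metric.mem_closedBall.2 le_rfl)
    · -- boundary case: approximate from inside
      have hxe : dist x z = 2 * ε := le_antisymm (Metric.mem_closedBall.1 hx)
        (not_lt.1 hxlt)
      have hxmem : x ∈ closure (Metric.ball z (2 * ε)) := by
        rw [closure_ball z (by positivity : (2:ℝ) * ε ≠ 0)]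
        exact hx
      obtain ⟨seq, hseqmem, hseqlim⟩ := mem_closure_iff_seq_limit.1 hxmem
      have hgx : Filter.Tendsto (fun n => g (seq n)) Filter.atTop (nhds (g x)) :=
        ((hdiff x hx).continuousAt.tendsto).comp hseqlim
      have haffn : ∀ n, g (seq n) = g z + ⟪vec2 mz, seq n - z⟫ := fun n =>
        haffρ (dist (seq n) z) dist_nonneg (hseqmem n) (seq n) (Metric.mem_closedBall.2 le_rfl)
      have hlin : Filter.Tendsto (fun n => g z + ⟪vec2 mz, seq n - z⟫)
          Filter.atTop (nhds (g z + ⟪vec2 mz, x - z⟫)) := by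
        apply Filter.Tendsto.add tendsto_const_nhds
        exact ((continuous_const.inner (continuous_id.sub continuous_const)).tendsto x).comp
          hseqlim
      have : Filter.Tendsto (fun n => g (seq n)) Filter.atTop
          (nhds (g z + ⟪vec2 mz, x - z⟫)) := by
        rw [show (fun n => g (seq n)) = fun n => g z + ⟪vec2 mz, seq n - z⟫ from
          funext haffn]
        exact hlin
      exact tendsto_nhds_unique hgx this
  -- f's touching monomial at z
  obtain ⟨⟨mF, hmFB, hfzeq⟩, -⟩ := hf' z hzU
  have hfle : ∀ x ∈ U, f x ≤ f z + ⟪vec2 mF, x - z⟫ := by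
    intro x hx
    have h1 := (hf' x hx).2 mF hmFB
    rw [inner_sub_right]
    linarith
  have hfgz := hfg z hzU
  rw [abs_lt] at hfgz
  -- the slope of f's touching monomial at z coincides with mz's
  have hslope : vec2 mF = vec2 mz := by
    by_contra hne
    set e : EuclideanSpace ℝ (Fin 2) := vec2 mF - vec2 mz with he
    have he0 : e ≠ 0 := sub_ne_zero.2 hne
    have h1e : 1 ≤ ‖e‖ := by
      rw [he, ← vec2_sub]
      apply one_le_norm_vec2
      intro hc
      exact hne (congrArg vec2 (sub_eq_zero.1 hc))
    have hne' : 0 < ‖e‖ := by linarith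
    set y : EuclideanSpace ℝ (Fin 2) := z - ((2 * ε) / ‖e‖) • e with hy
    have hyK : y ∈ Metric.closedBall z (2 * ε) := by
      rw [Metric.mem_closedBall, dist_eq_norm, hy]
      have h : z - ((2 * ε) / ‖e‖) • e - z = -(((2 * ε) / ‖e‖) • e) := by abel
      rw [h, norm_neg, norm_smul, Real.norm_eq_abs, abs_of_pos (by positivity)]
      rw [div_mul_cancel₀]
      exact hne'.ne'
    have h1 := hfle y (hball hyK)
    have h2 := hfg y (hball hyK)
    rw [abs_lt] at h2
    have h3 := hgaff y hyK
    have h4 : ⟪vec2 mF, y - z⟫ = ⟪vec2 mz, y - z⟫ - 2 * ε * ‖e‖ := by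
      have h6 : ⟪vec2 mF, y - z⟫ - ⟪vec2 mz, y - z⟫ = ⟪e, y - z⟫ := by
        rw [he, inner_sub_left]
      have h5 : ⟪e, y - z⟫ = -(2 * ε * ‖e‖) := by
        rw [hy]
        have hyz : z - ((2 * ε) / ‖e‖) • e - z = -(((2 * ε) / ‖e‖) • e) := by abel
        rw [hyz, inner_neg_right, real_inner_smul_right, real_inner_self_eq_norm_sq]
        field_simp
      linarith
    nlinarith
  -- conclusion: f is affine near z, contradiction with non-differentiability
  set ρ : ℝ := g z + ε - f z with hρ
  have hρpos : 0 < ρ := by rw [hρ]; linarith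
  set r : ℝ := min (ρ / 2) ε with hr
  have hrpos : 0 < r := by rw [hr]; positivity
  have hrε : r ≤ ε := min_le_right _ _
  have hrρ : r < ρ := lt_of_le_of_lt (min_le_left _ _) (by linarith)
  have haff : ∀ x ∈ Metric.closedBall z r, f x = f z + ⟪vec2 mz, x - z⟫ := by
    intro x hx
    have hxK : x ∈ Metric.closedBall z (2 * ε) :=
      Metric.closedBall_subset_closedBall (by linarith) hx
    have hxU : x ∈ U := hball hxK
    have hle1 : f x ≤ f z + ⟪vec2 mz, x - z⟫ := by
      have := hfle x hxU
      rw [hslope] at this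
      exact this
    -- touching monomial of f at x
    obtain ⟨⟨m, hmB, hfxeq⟩, -⟩ := hf' x hxU
    have hmglob : ∀ y ∈ U, f y ≤ f x + ⟪vec2 m, y - x⟫ := by
      intro y hy
      have h1 := (hf' y hy).2 m hmB
      rw [inner_sub_right]
      linarith
    by_cases hcase : vec2 m = vec2 mz
    · have h1 := hmglob z hzU
      rw [hcase] at h1
      have h3 : ⟪vec2 mz, z - x⟫ = -⟪vec2 mz, x - z⟫ := by
        rw [← inner_neg_right]; congr 1; abel
      rw [h3] at h1
      linarith
    · exfalso
      set e' : EuclideanSpace ℝ (Fin 2) := vec2 m - vec2 mz with he'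
      have he'0 : e' ≠ 0 := sub_ne_zero.2 hcase
      have h1e : 1 ≤ ‖e'‖ := by
        rw [he', ← vec2_sub]
        apply one_le_norm_vec2
        intro hc
        exact hcase (congrArg vec2 (sub_eq_zero.1 hc))
      have hne' : 0 < ‖e'‖ := by linarith
      set t : ℝ := 2 * ε - dist x z with ht
      have htpos : 0 < t := by
        rw [ht]
        have := Metric.mem_closedBall.1 hx
        linarith [hrε, hε]
      have htlb : 2 * ε - r ≤ t := by
        rw [ht]
        have := Metric.mem_closedBall.1 hx
        linarith
      set y : EuclideanSpace ℝ (Fin 2) := x - (t / ‖e'‖) • e' with hy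
      have hyx : dist y x = t := by
        rw [dist_eq_norm, hy]
        have h : x - (t / ‖e'‖) • e' - x = -((t / ‖e'‖) • e') := by abel
        rw [h, norm_neg, norm_smul, Real.norm_eq_abs, abs_of_pos (by positivity)]
        rw [div_mul_cancel₀]
        exact hne'.ne'
      have hyK : y ∈ Metric.closedBall z (2 * ε) := by
        rw [Metric.mem_closedBall]
        calc dist y z ≤ dist y x + dist x z := dist_triangle _ _ _
          _ ≤ 2 * ε := by rw [hyx, ht]; linarith
      have h1 := hmglob y (hball hyK)
      have h2 := hfg y (hball hyK)
      rw [abs_lt] at h2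
      have h3 := hgaff y hyK
      have h4 : ⟪vec2 m, y - x⟫ = ⟪vec2 mz, y - x⟫ - t * ‖e'‖ := by
        have h5 : ⟪e', y - x⟫ = -(t * ‖e'‖) := by
          rw [hy]
          have hyz : x - (t / ‖e'‖) • e' - x = -((t / ‖e'‖) • e') := by abel
          rw [hyz, inner_neg_right, real_inner_smul_right, real_inner_self_eq_norm_sq]
          field_simp
        have h6 : ⟪vec2 m, y - x⟫ - ⟪vec2 mz, y - x⟫ = ⟪e', y - x⟫ := by
          rw [he', inner_sub_left]
        linarith
      have h6 : ⟪vec2 mz, y - z⟫ - ⟪vec2 mz, y - x⟫ = ⟪vec2 mz, x - z⟫ := by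
        rw [← inner_sub_right]
        congr 1
        abel
      have h7 : t * 1 ≤ t * ‖e'‖ := mul_le_mul_of_nonneg_left h1e htpos.le
      nlinarith [hle1]
  -- f equals an affine (hence differentiable) function near z
  have hev : f =ᶠ[nhds z] (fun x => f z + (⟪vec2 mz, x⟫ - ⟪vec2 mz, z⟫)) := by
    filter_upwards [Metric.closedBall_mem_nhds z hrpos] with x hx
    rw [haff x hx, inner_sub_right]
  have hdaff : DifferentiableAt ℝ
      (fun x : EuclideanSpace ℝ (Fin 2) => f z + (⟪vec2 mz, x⟫ - ⟪vec2 mz, z⟫)) z := by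
    apply (differentiableAt_const _).add
    exact ((innerSL ℝ (vec2 mz)).differentiableAt).sub_const _
  exact hnd (hdaff.congr_of_eventuallyEq hev)
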